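/- Let (X,𝒜) be a minimal action of ℤ^d by homeomorphisms on a Cantor set X, let C ⊆ X be a nonempty clopen set and y ∈ C. Then the set of return times R_C(y) = {n ∈ ℤ^d : 𝒜(n,y) ∈ C} is repetitive: for each finite patch P ⊆ R_C(y) there exists M > 0 such that every open ball of radius M in ℝ^d contains a translated copy of P lying inside R_C(y) (i.e., contains a set m + P ⊆ R_C(y) for some m ∈ ℤ^d). -/

import Mathlib

/-- The canonical embedding `ℤ^d → ℝ^d` (Euclidean space). -/
noncomputable def toRd (d : ℕ) (n : Fin d → ℤ) : EuclideanSpace ℝ (Fin d) :=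
  WithLp.toLp 2 (fun i => (n i : ℝ))

lemma toRd_add (d : ℕ) (a b : Fin d → ℤ) : toRd d (a + b) = toRd d a + toRd d b := by
  ext i
  simp [toRd]

/-- Let `(X, 𝒜)` be a minimal `ℤ^d`-action by homeomorphisms on a Cantor set `X`, `C` a
nonempty clopen subset and `y ∈ C`. Then `R_C(y) = {n ∈ ℤ^d : 𝒜(n, y) ∈ C}` is repetitive:
for each finite patch `P ⊆ R_C(y)` there exists `M > 0` such that every open ball of radius
`M` in `ℝ^d` contains a translated copy `m + P ⊆ R_C(y)` for some `m ∈ ℤ^d`. -/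
theorem stmt2 (d : ℕ) (X : Type*) [MetricSpace X] [CompactSpace X] [Nonempty X]
    [TotallyDisconnectedSpace X] (hperf : Perfect (Set.univ : Set X))
    (A : (Fin d → ℤ) → X → X)
    (hA0 : ∀ y : X, A 0 y = y)
    (hAadd : ∀ n m : Fin d → ℤ, ∀ y : X, A (n + m) y = A n (A m y))
    (hAcont : ∀ n : Fin d → ℤ, Continuous (A n))
    (hmin : ∀ y : X, Dense (Set.range fun n : Fin d → ℤ => A n y))
    (C : Set X) (hC : IsClopen C) (hCne : C.Nonempty) (y : X) (hy : y ∈ C) :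
    ∀ P : Finset (Fin d → ℤ), (↑P : Set (Fin d → ℤ)) ⊆ {n : Fin d → ℤ | A n y ∈ C} →
      ∃ M : ℝ, 0 < M ∧ ∀ c : EuclideanSpace ℝ (Fin d), ∃ m : Fin d → ℤ,
        (∀ p ∈ P, A (m + p) y ∈ C) ∧ (∀ p ∈ P, toRd d (m + p) ∈ Metric.ball c M) := by
  intro P hP
  -- the set of points whose whole P-pattern lies in C
  set D : Set X := {x | ∀ p ∈ P, A p x ∈ C} with hD
  have hDopen : IsOpen D := by
    have : D = ⋂ p ∈ P, (A p) ⁻¹' C := by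
      ext x; simp [hD]
    rw [this]
    exact isOpen_biInter_finset fun p _ => hC.isOpen.preimage (hAcont p)
  have hyD : y ∈ D := fun p hp => hP hp
  -- compactness: finitely many translates of D cover X
  have hcov : (Set.univ : Set X) ⊆ ⋃ n : Fin d → ℤ, (A n) ⁻¹' D := by
    intro x _
    obtain ⟨z, hzr, hzD⟩ := (hmin x).exists_mem_open hDopen ⟨y, hyD⟩
    obtain ⟨n, rfl⟩ := hzr
    exact Set.mem_iUnion.2 ⟨n, hzD⟩
  obtain ⟨F, hF⟩ := isCompact_univ.elim_finite_subcover
    (fun n : Fin d → ℤ => (A n) ⁻¹' D) (fun n => hDopen.preimage (hAcont n)) hcov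
  -- bounds on norms over F and P
  obtain ⟨R1, hR1⟩ := (F.image fun n => ‖toRd d n‖).exists_le
  obtain ⟨R2, hR2⟩ := (P.image fun p => ‖toRd d p‖).exists_le
  have hR1' : ∀ n ∈ F, ‖toRd d n‖ ≤ R1 := fun n hn =>
    hR1 _ (Finset.mem_image_of_mem _ hn)
  have hR2' : ∀ p ∈ P, ‖toRd d p‖ ≤ R2 := fun p hp =>
    hR2 _ (Finset.mem_image_of_mem _ hp)
  have hR1nn : 0 ≤ R1 ∨ F = ∅ := by
    rcases F.eq_empty_or_nonempty with h | ⟨n, hn⟩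
    · exact Or.inr h
    · exact Or.inl ((norm_nonneg _).trans (hR1' n hn))
  -- replace R1, R2 by nonnegative bounds
  refine ⟨max R1 0 + max R2 0 + d + 1, by positivity, fun c => ?_⟩
  -- round c to an integer point
  set k : Fin d → ℤ := fun i => round (c i) with hk
  have hkc : dist (toRd d k) c ≤ (d : ℝ) := by
    have h1 : dist (toRd d k) c ≤ Real.sqrt (∑ _i : Fin d, (1 : ℝ)) := by
      rw [EuclideanSpace.dist_eq]
      apply Real.sqrt_le_sqrt
      apply Finset.sum_le_sum
      intro i _
      have : |toRd d k i - c i| ≤ 1 := by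
        have := abs_sub_round (c i)
        simp only [toRd, hk, PiLp.toLp_apply]
        rw [abs_sub_comm]
        linarith
      calc dist (toRd d k i) (c i) ^ 2 = |toRd d k i - c i| ^ 2 := by
            rw [Real.dist_eq, sq_abs]
        _ ≤ 1 ^ 2 := by nlinarith [abs_nonneg (toRd d k i - c i)]
        _ = 1 := one_pow 2
    have h2 : Real.sqrt (∑ _i : Fin d, (1 : ℝ)) ≤ (d : ℝ) := by
      rw [Finset.sum_const, Finset.card_univ, Fintype.card_fin, nsmul_eq_mul, mul_one]
      have hd2 : (d : ℝ) ≤ (d : ℝ) ^ 2 := by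
        have : d ≤ d ^ 2 := Nat.le_self_pow two_ne_zero d
        exact_mod_cast this
      calc Real.sqrt (d : ℝ) ≤ Real.sqrt ((d : ℝ) ^ 2) := Real.sqrt_le_sqrt hd2
        _ = (d : ℝ) := Real.sqrt_sq (Nat.cast_nonneg d)
    linarith
  -- find the translate
  have hmem : A k y ∈ ⋃ n ∈ F, (A n) ⁻¹' D := hF (Set.mem_univ _)
  obtain ⟨n, hnF, hnD⟩ := Set.mem_iUnion₂.1 hmem
  refine ⟨n + k, fun p hp => ?_, fun p hp => ?_⟩
  · have : A (n + k) y ∈ D := by rw [hAadd]; exact hnD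
    have h2 : A p (A (n + k) y) ∈ C := this p hp
    rw [add_comm (n + k) p, hAadd]
    exact h2
  · rw [Metric.mem_ball]
    have heq : toRd d (n + k + p) = toRd d k + (toRd d n + toRd d p) := by
      rw [toRd_add, toRd_add]
      abel
    calc dist (toRd d (n + k + p)) c
        ≤ dist (toRd d (n + k + p)) (toRd d k) + dist (toRd d k) c := dist_triangle _ _ _
      _ = ‖toRd d n + toRd d p‖ + dist (toRd d k) c := by
          rw [heq, dist_eq_norm]; congr 1; abel
      _ ≤ ‖toRd d n‖ + ‖toRd d p‖ + dist (toRd d k) c := by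
          gcongr; exact norm_add_le _ _
      _ ≤ max R1 0 + max R2 0 + (d : ℝ) := by
          gcongr
          · exact (hR1' n hnF).trans (le_max_left _ _)
          · exact (hR2' p hp).trans (le_max_left _ _)
      _ < max R1 0 + max R2 0 + d + 1 := by linarith
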